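/- For every R > 0 there exist constants δ > 0 and M > 0, depending only on R, with the following property. Let E ∈ 𝒰_R ⊆ ℝ³, let p ∈ ∂E with admissible centers p′, p′′, and let g be an affine isometry of ℝ³ with g(0) = p and g(e₃) − g(0) = (p′′ − p′)/(2R); set C := {x ∈ ℝ² : |x| < δ} × (−R, R). Then for every x̄ ∈ ℝ² with |x̄| < δ, every plane γ ⊆ ℝ³ containing the point g(x̄, 0) and parallel to the direction g(e₃) − g(0), and every q ∈ ∂E ∩ g(C) ∩ γ, there exist points c′, c′′ ∈ γ with |q − c′| = |q − c′′| = MR such that the open two-dimensional disk {y ∈ γ : |y − c′| < MR} is contained in E and the open disk {y ∈ γ : |y − c′′| < MR} is disjoint from E (i.e., the planar section E ∩ γ satisfies the exterior and interior sphere condition with radius MR within γ at q). -/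

import Mathlib

open Set Metric MeasureTheory Filter Topology ENNReal NNReal

noncomputable section

abbrev En (n : ℕ) := EuclideanSpace ℝ (Fin n)

def sphereCond (n : ℕ) (R : ℝ) (E : Set (En n)) : Prop :=
  ∀ p ∈ frontier E, ∃ p' p'' : En n, dist p p' = R ∧ dist p p'' = R ∧
    ball p' R ⊆ E ∧ ball p'' R ∩ E = ∅

def UR (n : ℕ) (R : ℝ) : Set (Set (En n)) :=
  {E | IsClosed E ∧ Bornology.IsBounded E ∧ sphereCond n R E}

/-- The point of `ℝ³` with horizontal coordinates `x` and vertical coordinate `z`. -/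
def emb3 (x : En 2) (z : ℝ) : En 3 :=
  (WithLp.equiv 2 (Fin 3 → ℝ)).symm (fun i => if h : (i : ℕ) < 2 then x ⟨i, h⟩ else z)



lemma emb3_apply0 (x : En 2) (z : ℝ) : emb3 x z 0 = x 0 := rfl
lemma emb3_apply1 (x : En 2) (z : ℝ) : emb3 x z 1 = x 1 := rfl
lemma emb3_apply2 (x : En 2) (z : ℝ) : emb3 x z 2 = z := rfl

lemma emb3_inner (x : En 2) (z : ℝ) : (inner ℝ (emb3 x z) (emb3 0 1) : ℝ) = z := by
  simp [PiLp.inner_apply, Fin.sum_univ_three, emb3_apply0, emb3_apply1, emb3_apply2]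

lemma emb3_normsq (x : En 2) (z : ℝ) : ‖emb3 x z‖^2 = ‖x‖^2 + z^2 := by
  rw [← real_inner_self_eq_norm_sq, ← real_inner_self_eq_norm_sq]
  simp only [PiLp.inner_apply, Fin.sum_univ_three, Fin.sum_univ_two,
    emb3_apply0, emb3_apply1, emb3_apply2]
  simp

lemma emb3_norm_01 : ‖emb3 0 1‖ = 1 := by
  have h := emb3_normsq 0 1
  simp only [norm_zero] at h
  nlinarith [norm_nonneg (emb3 (0:En 2) 1), sq_nonneg (‖emb3 (0:En 2) 1‖ - 1)]

lemma disjoint_balls_dist {a b : En 3} {r : ℝ}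
    (h : ball a r ∩ ball b r = ∅) : 2 * r ≤ dist a b := by
  by_contra hlt
  push_neg at hlt
  have hm : midpoint ℝ a b ∈ ball a r ∩ ball b r := by
    constructor
    · rw [mem_ball, dist_comm, dist_left_midpoint]
      simp only [Real.norm_ofNat]
      linarith
    · rw [mem_ball, dist_comm, dist_right_midpoint]
      simp only [Real.norm_ofNat]
      linarith
  rw [h] at hm; exact hm

lemma midpoint_of_dists {p a b : En 3} {r : ℝ} (h1 : dist p a = r) (h2 : dist p b = r)
    (h3 : ‖b - a‖ = 2 * r) : p - a = b - p := by
  have d1 : ‖p - a‖ = r := by rw [← h1, dist_eq_norm]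
  have d2 : ‖b - p‖ = r := by
    rw [show (b - p) = -(p - b) by abel, norm_neg, ← dist_eq_norm]; exact h2
  have par := parallelogram_law_with_norm ℝ (p - a) (b - p)
  have e1 : (p - a) + (b - p) = b - a := by abel
  rw [e1] at par
  have s3 : ‖b - a‖ * ‖b - a‖ = 4 * (r * r) := by rw [h3]; ring
  have s1 : ‖p - a‖ * ‖p - a‖ = r * r := by rw [d1]
  have s2 : ‖b - p‖ * ‖b - p‖ = r * r := by rw [d2]
  have key : ‖(p - a) - (b - p)‖ * ‖(p - a) - (b - p)‖ = 0 := by linarith [par]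
  exact sub_eq_zero.mp (norm_eq_zero.mp (mul_self_eq_zero.mp key))

lemma disk_in_ball {R : ℝ} (hR : 0 < R) (a w q o : En 3) (hw : ‖w‖ = 1)
    (hq : (inner ℝ (q - a) w : ℝ) = 0) (hdist : dist q o = R)
    (hs : (inner ℝ (o - q) w : ℝ)^2 ≤ R^2/16) :
    ∃ c : En 3, (inner ℝ (c - a) w : ℝ) = 0 ∧ dist q c = (1/2) * R ∧
      ∀ y : En 3, (inner ℝ (y - a) w : ℝ) = 0 → dist y c < (1/2) * R → y ∈ ball o R := by
  set s : ℝ := inner ℝ (o - q) w with hs_def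
  set P : En 3 := o - s • w with hP
  have hqo : (inner ℝ (q - o) w : ℝ) = -s := by
    rw [hs_def, ← inner_neg_left]; congr 1; abel
  have heqp : q - P = (q - o) + s • w := by rw [hP]; abel
  have hnorm_qo : ‖q - o‖ = R := by rw [← dist_eq_norm]; exact hdist
  have hr2 : ‖q - P‖^2 = R^2 - s^2 := by
    rw [heqp, norm_add_sq_real, real_inner_smul_right, hqo, hnorm_qo, norm_smul]
    simp [hw, abs_sq]
    ring
  set r : ℝ := ‖q - P‖ with hr_def
  have hrpos : R/2 < r := by nlinarith [norm_nonneg (q - P)]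
  have hrne : r ≠ 0 := ne_of_gt (by linarith)
  set lam : ℝ := (R/2)/r with hlam
  have hlam_pos : 0 < lam := by positivity
  have hlam_lt : lam < 1 := by rw [hlam, div_lt_one (by linarith)]; linarith
  set c : En 3 := q + lam • (P - q) with hc
  have hPq : (inner ℝ (P - q) w : ℝ) = 0 := by
    have : P - q = (o - q) - s • w := by rw [hP]; abel
    rw [this, inner_sub_left, real_inner_smul_left, real_inner_self_eq_norm_sq, hw]
    simp [hs_def]
  refine ⟨c, ?_, ?_, ?_⟩
  · have : c - a = (q - a) + lam • (P - q) := by rw [hc]; abel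
    rw [this, inner_add_left, hq, real_inner_smul_left, hPq]; ring
  · have : q - c = (-lam) • (P - q) := by rw [hc]; module
    rw [dist_eq_norm, this, norm_smul, norm_neg]
    simp only [norm_neg, Real.norm_eq_abs, abs_of_pos hlam_pos]
    rw [show ‖P - q‖ = r by rw [hr_def, norm_sub_rev]]
    field_simp
    have hl : lam * r = R / 2 := div_mul_cancel₀ _ hrne
    linear_combination 2 * hl
  · intro y hy1 hy2
    have hPa : (inner ℝ (P - a) w : ℝ) = 0 := by
      have : P - a = (P - q) + (q - a) := by abel
      rw [this, inner_add_left, hPq, hq]; ring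
    have hyP : (inner ℝ (y - P) w : ℝ) = 0 := by
      have : y - P = (y - a) - (P - a) := by abel
      rw [this, inner_sub_left, hy1, hPa]; ring
    have hcP : ‖c - P‖ = r - R/2 := by
      have : c - P = (1 - lam) • (q - P) := by rw [hc]; module
      rw [this, norm_smul, Real.norm_eq_abs, abs_of_pos (by linarith), ← hr_def, hlam]
      field_simp
    have hyPlt : ‖y - P‖ < r := by
      calc ‖y - P‖ ≤ ‖y - c‖ + ‖c - P‖ := by
            have : y - P = (y - c) + (c - P) := by abel
            rw [this]; exact norm_add_le _ _
        _ < R/2 + (r - R/2) := by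
            rw [hcP, ← dist_eq_norm] at *
            linarith [hy2]
        _ = r := by ring
    have hyo : ‖y - o‖^2 = ‖y - P‖^2 + s^2 := by
      have : y - o = (y - P) + (-s) • w := by rw [hP]; module
      rw [this, norm_add_sq_real, real_inner_smul_right, hyP, norm_smul]
      simp [hw, abs_sq]
    rw [mem_ball, dist_eq_norm]
    nlinarith [norm_nonneg (y - o), norm_nonneg (y - P)]

set_option maxHeartbeats 4000000 in
theorem planar_sections_sphere_condition (R : ℝ) (hR : 0 < R) :
    ∃ δ > (0:ℝ), ∃ M > (0:ℝ), ∀ E ∈ UR 3 R, ∀ p p' p'' : En 3,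
      p ∈ frontier E →
      dist p p' = R → dist p p'' = R → ball p' R ⊆ E → ball p'' R ∩ E = ∅ →
      ∀ g : En 3 ≃ᵢ En 3, g 0 = p → g (emb3 0 1) - g 0 = (2 * R)⁻¹ • (p'' - p') →
      ∀ xb : En 2, ‖xb‖ < δ →
      ∀ w : En 3, ‖w‖ = 1 → (inner ℝ w (g (emb3 0 1) - g 0) : ℝ) = 0 →
      ∀ q, q ∈ frontier E ∩
          (g '' {y | ∃ x : En 2, ‖x‖ < δ ∧ ∃ z ∈ Ioo (-R) R, y = emb3 x z}) ∩
          {y : En 3 | (inner ℝ (y - g (emb3 xb 0)) w : ℝ) = 0} →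
      ∃ c' ∈ {y : En 3 | (inner ℝ (y - g (emb3 xb 0)) w : ℝ) = 0},
      ∃ c'' ∈ {y : En 3 | (inner ℝ (y - g (emb3 xb 0)) w : ℝ) = 0},
        dist q c' = M * R ∧ dist q c'' = M * R ∧
        {y ∈ {y : En 3 | (inner ℝ (y - g (emb3 xb 0)) w : ℝ) = 0} | dist y c' < M * R} ⊆ E ∧
        {y ∈ {y : En 3 | (inner ℝ (y - g (emb3 xb 0)) w : ℝ) = 0} | dist y c'' < M * R} ∩ E
          = ∅ := by
  refine ⟨R/100, by positivity, 1/2, by norm_num, ?_⟩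
  intro E hE p p' p'' hpf hpp' hpp'' hball' hball'' g hg0 hgv xb hxb w hw hwv q hq
  obtain ⟨hEclosed, hEbdd, hEsph⟩ := hE
  set a : En 3 := g (emb3 xb 0) with ha
  clear_value a
  set ν : En 3 := g (emb3 0 1) - g 0 with hν
  set L := g.toRealLinearIsometryEquiv with hL
  have hLap : ∀ y, L y = g y - g 0 := fun y => g.toRealLinearIsometryEquiv_apply y
  have hν_eq : ν = L (emb3 0 1) := by rw [hLap]
  have hνnorm : ‖ν‖ = 1 := by rw [hν_eq, L.norm_map, emb3_norm_01]
  have hwvν : (inner ℝ ν w : ℝ) = 0 := by rw [real_inner_comm]; exact hwv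
  -- p' and p'' are p ∓ R ν
  have hp'p'' : p'' - p' = (2*R) • ν := by
    rw [hgv, smul_smul, mul_inv_cancel₀ (by positivity : (2:ℝ)*R ≠ 0), one_smul]
  have hnormp : ‖p'' - p'‖ = 2*R := by
    rw [hp'p'', norm_smul, hνnorm, Real.norm_eq_abs, abs_of_pos (by positivity), mul_one]
  have hmid : p - p' = p'' - p := midpoint_of_dists hpp' hpp'' hnormp
  have hpRν : p - p' = R • ν := by
    have h2 : (2:ℝ) • (p - p') = (2*R) • ν := by
      rw [two_smul]; nth_rewrite 1 [hmid]; rw [← hp'p'']; abel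
    have := congrArg (fun v : En 3 => (2:ℝ)⁻¹ • v) h2
    simpa [smul_smul, show (2:ℝ)⁻¹ * (2*R) = R by ring] using this
  have hp'eq : p' = p - R • ν := by rw [← hpRν]; abel
  have hp''eq : p'' = p + R • ν := by
    have : p'' - p = R • ν := by rw [← hmid]; exact hpRν
    rw [← this]; abel
  -- decompose q
  obtain ⟨⟨hqf, hqim⟩, hqpl⟩ := hq
  obtain ⟨y0, ⟨x, hx, z, hz, rfl⟩, hqy⟩ := hqim
  have hqE : q ∈ E := by
    rw [← hEclosed.closure_eq]; exact hqf.1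
  have hqni : q ∉ interior E := hqf.2
  set u : En 3 := q - p with hu_def
  have hu : u = L (emb3 x z) := by rw [hu_def, hLap, hqy, hg0]
  have huz : (inner ℝ u ν : ℝ) = z := by
    rw [hu, hν_eq, L.inner_map_map, emb3_inner]
  have hun : ‖u‖^2 = ‖x‖^2 + z^2 := by rw [hu, L.norm_map, emb3_normsq]
  clear_value u ν L
  -- q is outside both balls at p
  have hq1 : R ≤ dist q p' := by
    by_contra hlt
    push_neg at hlt
    exact hqni (interior_maximal hball' isOpen_ball (mem_ball.mpr hlt))
  have hq2 : R ≤ dist q p'' := by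
    by_contra hlt
    push_neg at hlt
    have : q ∈ ball p'' R ∩ E := ⟨mem_ball.mpr hlt, hqE⟩
    rw [hball''] at this; exact this
  -- bound |z| and ‖u‖
  have hsq1 : ‖u‖^2 + 2*R*z ≥ 0 := by
    have e : q - p' = u + R • ν := by rw [hp'eq, hu_def]; abel
    have : R ≤ ‖u + R • ν‖ := by rw [← e, ← dist_eq_norm]; exact hq1
    have hexp : ‖u + R • ν‖^2 = ‖u‖^2 + 2*R*z + R^2 := by
      rw [norm_add_sq_real, real_inner_smul_right, huz, norm_smul, hνnorm,
        Real.norm_eq_abs, abs_of_pos hR]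
      ring
    have h4 : R^2 ≤ ‖u + R • ν‖^2 := pow_le_pow_left₀ hR.le this 2
    linarith [hexp, h4]
  have hsq2 : ‖u‖^2 - 2*R*z ≥ 0 := by
    have e : q - p'' = u - R • ν := by rw [hp''eq, hu_def]; abel
    have : R ≤ ‖u - R • ν‖ := by rw [← e, ← dist_eq_norm]; exact hq2
    have hexp : ‖u - R • ν‖^2 = ‖u‖^2 - 2*R*z + R^2 := by
      rw [norm_sub_sq_real, real_inner_smul_right, huz, norm_smul, hνnorm,
        Real.norm_eq_abs, abs_of_pos hR]
      ring
    have h4 : R^2 ≤ ‖u - R • ν‖^2 := pow_le_pow_left₀ hR.le this 2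
    linarith [hexp, h4]
  have hzR : -R < z ∧ z < R := ⟨hz.1, hz.2⟩
  have hzsmall : |z| ≤ R/10000 := by
    rcases abs_cases z with ⟨he, _⟩ | ⟨he, _⟩ <;> rw [he] <;>
      nlinarith [hun, hx, norm_nonneg x, hzR.1, hzR.2, abs_nonneg z]
  have hu_le : ‖u‖ ≤ R/99 := by
    have h1 : ‖u‖^2 ≤ (R/100)^2 + (R/10000)^2 := by
      have := sq_abs z
      nlinarith [hx, norm_nonneg x, hzsmall, abs_nonneg z]
    nlinarith [norm_nonneg u, hR]
  -- sphere condition at q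
  obtain ⟨q', q'', hq'd, hq''d, hq'b, hq''b⟩ := hEsph q hqf
  have hdisj : ball q' R ∩ ball q'' R = ∅ := by
    rw [eq_empty_iff_forall_notMem]
    intro y ⟨hy1, hy2⟩
    have : y ∈ ball q'' R ∩ E := ⟨hy2, hq'b hy1⟩
    rw [hq''b] at this; exact this
  have hqq : dist q' q'' = 2*R := by
    refine le_antisymm ?_ (disjoint_balls_dist hdisj)
    calc dist q' q'' ≤ dist q' q + dist q q'' := dist_triangle _ _ _
      _ = 2*R := by rw [dist_comm q' q, hq'd, hq''d]; ring
  have hmidq : q - q' = q'' - q := by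
    refine midpoint_of_dists hq'd hq''d ?_
    rw [← dist_eq_norm, dist_comm]; exact hqq
  set νq : En 3 := R⁻¹ • (q'' - q) with hνq
  have hRνq : R • νq = q'' - q := by
    rw [hνq, smul_smul, mul_inv_cancel₀ hR.ne', one_smul]
  have hq''eq : q'' = q + R • νq := by rw [hRνq]; abel
  have hq'eq : q' = q - R • νq := by rw [hRνq, ← hmidq]; abel
  have hνq_norm : ‖νq‖ = 1 := by
    have hd : ‖q'' - q‖ = R := by rw [← dist_eq_norm, dist_comm]; exact hq''d
    rw [hνq, norm_smul, Real.norm_eq_abs, abs_of_pos (by positivity : (0:ℝ) < R⁻¹), hd,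
      inv_mul_cancel₀ hR.ne']
  clear_value νq
  -- cross disjointness: inner ℝ ball at q vs outer ball at p
  have hdisj2 : ball q' R ∩ ball p'' R = ∅ := by
    rw [eq_empty_iff_forall_notMem]
    intro y ⟨hy1, hy2⟩
    have : y ∈ ball p'' R ∩ E := ⟨hy2, hq'b hy1⟩
    rw [hball''] at this; exact this
  have hcross : 2*R ≤ dist q' p'' := disjoint_balls_dist hdisj2
  have hsum_norm : 2 - 1/99 ≤ ‖νq + ν‖ := by
    have e : q' - p'' = u - R • (νq + ν) := by
      rw [hq'eq, hp''eq, hu_def, smul_add]; abel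
    have h1 : 2*R ≤ ‖u - R • (νq + ν)‖ := by rw [← e, ← dist_eq_norm]; exact hcross
    have h2 : ‖u - R • (νq + ν)‖ ≤ ‖u‖ + R * ‖νq + ν‖ := by
      calc ‖u - R • (νq + ν)‖ ≤ ‖u‖ + ‖R • (νq + ν)‖ := norm_sub_le _ _
        _ = ‖u‖ + R * ‖νq + ν‖ := by
            rw [norm_smul, Real.norm_eq_abs, abs_of_pos hR]
    have h3 : 2*R - R/99 ≤ R * ‖νq + ν‖ := by linarith [hu_le]
    have h4 : (2 - 1/99) * R ≤ ‖νq + ν‖ * R := by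
      calc (2 - 1/99 : ℝ) * R = 2*R - R/99 := by ring
        _ ≤ R * ‖νq + ν‖ := h3
        _ = ‖νq + ν‖ * R := mul_comm _ _
    exact le_of_mul_le_mul_right h4 hR
  have hinner : 97/99 ≤ (inner ℝ νq ν : ℝ) := by
    have hexp : ‖νq + ν‖^2 = 2 + 2 * (inner ℝ νq ν : ℝ) := by
      rw [norm_add_sq_real, hνq_norm, hνnorm]; ring
    have h2 : (2 - 1/99 : ℝ)^2 ≤ ‖νq + ν‖^2 :=
      pow_le_pow_left₀ (by norm_num) hsum_norm 2
    rw [hexp] at h2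
    norm_num at h2 ⊢
    linarith
  have hinner_le : (inner ℝ νq ν : ℝ) ≤ 1 := by
    have := real_inner_le_norm νq ν
    rw [hνq_norm, hνnorm] at this; linarith
  have hw2 : (inner ℝ νq w : ℝ)^2 ≤ 1/16 := by
    set t : ℝ := inner ℝ νq ν with ht
    set v : En 3 := νq - t • ν with hv
    clear_value v
    have hvw : (inner ℝ v w : ℝ) = inner ℝ νq w := by
      rw [hv, inner_sub_left, real_inner_smul_left, hwvν]; ring
    have hvn : ‖v‖^2 = 1 - t^2 := by
      rw [hv, norm_sub_sq_real, real_inner_smul_right, norm_smul, hνq_norm, hνnorm, ht,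
        Real.norm_eq_abs]
      rw [show |t| * (1:ℝ) = |t| by ring, ← ht]
      rw [show (|t|:ℝ)^2 = t^2 from sq_abs t]
      ring
    have habs := abs_real_inner_le_norm v w
    rw [hw, mul_one, hvw] at habs
    have h1 : (inner ℝ νq w : ℝ)^2 ≤ ‖v‖^2 := by
      nlinarith [abs_nonneg (inner ℝ νq w : ℝ), sq_abs (inner ℝ νq w : ℝ), norm_nonneg v]
    nlinarith [hinner, hinner_le]
  -- apply the disk lemma for the two balls at q
  have hs1 : (inner ℝ (q' - q) w : ℝ)^2 ≤ R^2/16 := by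
    have e : q' - q = (-R) • νq := by rw [hq'eq]; module
    rw [e, real_inner_smul_left]
    nlinarith [hw2, sq_nonneg R, hR]
  have hs2 : (inner ℝ (q'' - q) w : ℝ)^2 ≤ R^2/16 := by
    have e : q'' - q = R • νq := by rw [hq''eq]; module
    rw [e, real_inner_smul_left]
    nlinarith [hw2, sq_nonneg R, hR]
  obtain ⟨c1, hc1p, hc1d, hc1b⟩ := disk_in_ball hR a w q q' hw hqpl hq'd hs1
  obtain ⟨c2, hc2p, hc2d, hc2b⟩ := disk_in_ball hR a w q q'' hw hqpl hq''d hs2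
  refine ⟨c1, hc1p, c2, hc2p, hc1d, hc2d, ?_, ?_⟩
  · intro y hy
    exact hq'b (hc1b y hy.1 hy.2)
  · rw [eq_empty_iff_forall_notMem]
    rintro y ⟨⟨hy1, hy2⟩, hyE⟩
    have hb : y ∈ ball q'' R ∩ E := ⟨hc2b y hy1 hy2, hyE⟩
    rw [hq''b] at hb; exact hb
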